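/- Consider majority dynamics on Z². If the configuration η_t percolates (contains an infinite connected component of sites with opinion 1, using nearest-neighbor adjacency), then η_s percolates for all s ≥ t. Consequently, p_c(t) ≤ p_c(s) whenever t ≥ s, i.e., t ↦ p_c(t) is non-increasing. -/

import Mathlib

/-- A site configuration on `ℤ²`: `true` means open (opinion 1). -/
abbrev Config := (ℤ × ℤ) → Bool

/-- Nearest-neighbor adjacency in `ℤ²`. -/
def Adj (x y : ℤ × ℤ) : Prop := (x.1 - y.1).natAbs + (x.2 - y.2).natAbs = 1

/-- `f 0, …, f n` is a nearest-neighbor path of open sites of `η`. -/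
def OpenPath (η : Config) (n : ℕ) (f : ℕ → ℤ × ℤ) : Prop :=
  (∀ i < n, Adj (f i) (f (i + 1))) ∧ ∀ i ≤ n, η (f i) = true

/-- `η` contains an infinite nearest-neighbor connected component of open sites
(equivalently, an infinite self-avoiding open path). -/
def Percolates (η : Config) : Prop :=
  ∃ f : ℕ → ℤ × ℤ, Function.Injective f ∧ (∀ i, Adj (f i) (f (i + 1))) ∧ ∀ i, η (f i) = true

/-- The origin-type connection: there is an infinite self-avoiding open path starting at `x₀`. -/
def ConnectsToInfinity (η : Config) (x₀ : ℤ × ℤ) : Prop :=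
  ∃ f : ℕ → ℤ × ℤ, f 0 = x₀ ∧ Function.Injective f ∧ (∀ i, Adj (f i) (f (i + 1))) ∧
    ∀ i, η (f i) = true

/-- Membership in the rectangle `[a₁, b₁] × [a₂, b₂]`. -/
def InRect (a b x : ℤ × ℤ) : Prop := a.1 ≤ x.1 ∧ x.1 ≤ b.1 ∧ a.2 ≤ x.2 ∧ x.2 ≤ b.2

/-- `H(a,b)`: an open left-right crossing of the rectangle `[1,a] × [1,b]`. -/
def Crossing (a b : ℕ) (η : Config) : Prop :=
  ∃ n f, OpenPath η n f ∧ (∀ i ≤ n, InRect (1, 1) ((a : ℤ), (b : ℤ)) (f i)) ∧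
    (f 0).1 = 1 ∧ (f n).1 = (a : ℤ)

/-- Membership in the box `[−m, m]²`. -/
def InBox (m : ℕ) (x : ℤ × ℤ) : Prop := |x.1| ≤ (m : ℤ) ∧ |x.2| ≤ (m : ℤ)

/-- `f 0, …, f n` is a closed nearest-neighbor loop. -/
def IsLoop (f : ℕ → ℤ × ℤ) (n : ℕ) : Prop := (∀ i < n, Adj (f i) (f (i + 1))) ∧ f n = f 0

/-- The loop `f 0, …, f n` surrounds the box `[−m,m]²`: every nearest-neighbor path started
in the box that leaves every box must meet the loop. -/
def Surrounds (f : ℕ → ℤ × ℤ) (n m : ℕ) : Prop :=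
  ∀ g : ℕ → ℤ × ℤ, InBox m (g 0) → (∀ i, Adj (g i) (g (i + 1))) →
    (∀ N : ℕ, ∃ i, ¬ InBox N (g i)) → ∃ i j, j ≤ n ∧ g i = f j

/-- `Cir(m,n)`: there is an open circuit surrounding `[−m,m]²` contained in `[−n,n]²`. -/
def Circuit (m n : ℕ) (η : Config) : Prop :=
  ∃ k f, IsLoop f k ∧ (∀ j ≤ k, InBox n (f j) ∧ η (f j) = true) ∧ Surrounds f k m

/-- An increasing (monotone) event of configurations. -/
def IncreasingEvent (A : Set Config) : Prop :=
  ∀ η η' : Config, (∀ x, η x = true → η' x = true) → η ∈ A → η' ∈ A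

/-- Positive association (FKG inequality) for a measure on configurations. -/
def PositivelyAssociated (μ : MeasureTheory.Measure Config) : Prop :=
  ∀ A B : Set Config, MeasurableSet A → MeasurableSet B →
    IncreasingEvent A → IncreasingEvent B → μ A * μ B ≤ μ (A ∩ B)

/-- The four nearest neighbors of a site. -/
def nbrs (x : ℤ × ℤ) : List (ℤ × ℤ) :=
  [(x.1 + 1, x.2), (x.1 - 1, x.2), (x.1, x.2 + 1), (x.1, x.2 - 1)]

/-- The number of neighbors of `x` with opinion 1 in the configuration `η`. -/
def onesCount (η : Config) (x : ℤ × ℤ) : ℕ := (nbrs x).countP (fun y => η y)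

/-- The majority update rule at `x`: adopt the majority opinion among the four neighbors,
keeping the current opinion in case of a tie. -/
def majUpdate (η : Config) (x : ℤ × ℤ) : Bool :=
  if 3 ≤ onesCount η x then true else if onesCount η x ≤ 1 then false else η x

/-- `F : ℝ → Config` is a trajectory of majority dynamics with clock ring times `R x` at each
site `x`: the opinion of `x` is constant on time intervals containing no ring of `x`, and at
each ring time the opinion of `x` becomes the majority opinion of the configuration just
before the ring. -/
def IsMajorityTrajectory (R : (ℤ × ℤ) → Set ℝ) (F : ℝ → Config) : Prop :=
  (∀ x : ℤ × ℤ, ∀ s₁ s₂ : ℝ, 0 ≤ s₁ → s₁ ≤ s₂ →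
    (∀ r ∈ R x, r ≤ s₁ ∨ s₂ < r) → F s₂ x = F s₁ x) ∧
  (∀ x : ℤ × ℤ, ∀ r ∈ R x, 0 < r →
    ∃ ε > (0 : ℝ), ∀ s : ℝ, r - ε < s → s < r → F r x = majUpdate (F s) x)

open MeasureTheory ProbabilityTheory

/-- The ring times of the Poisson clock at site `x`: partial sums of the i.i.d. exponential
gap variables `G x 0, G x 1, …`. -/
def ringTimes {Ω : Type*} (G : (ℤ × ℤ) → ℕ → Ω → ℝ) (ω : Ω) : (ℤ × ℤ) → Set ℝ :=
  fun x => Set.range (fun n : ℕ => ∑ i ∈ Finset.range (n + 1), G x i ω)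

/-- The critical percolation threshold at time `t` for the graphical construction `F`:
`p_c(t) = inf{p ∈ [0,1] : P[F_p percolates at time t] > 0}` (with the convention that the
infimum is `1` if no such `p` exists). -/
noncomputable def pcDyn {Ω : Type*} [MeasurableSpace Ω] (P : Measure Ω)
    (F : ℝ → Ω → ℝ → Config) (t : ℝ) : ℝ :=
  sInf (insert 1 {p | p ∈ Set.Icc (0 : ℝ) 1 ∧ 0 < P {ω | Percolates (F p ω t)}})


-- ===== auxiliary material =====
set_option linter.unusedSectionVars false
set_option linter.unusedVariables false
set_option maxHeartbeats 1000000

open MeasureTheory ProbabilityTheory Set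

-- ### auxiliary combinatorics

lemma mem_nbrs_of_adj {x y : ℤ × ℤ} (h : Adj x y) : y ∈ nbrs x := by
  rcases x with ⟨a, b⟩; rcases y with ⟨c, d⟩
  simp only [Adj] at h
  simp only [nbrs, List.mem_cons, Prod.mk.injEq, List.not_mem_nil, or_false]
  omega

lemma adj_symm {x y : ℤ × ℤ} (h : Adj x y) : Adj y x := by
  simp only [Adj] at h ⊢; omega

lemma two_le_countP {l : List (ℤ × ℤ)} {p : ℤ × ℤ → Bool} {a b : ℤ × ℤ}
    (ha : a ∈ l) (hb : b ∈ l) (hab : a ≠ b) (hpa : p a = true) (hpb : p b = true) :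
    2 ≤ l.countP p := by
  classical
  have ha' : a ∈ l.filter p := List.mem_filter.2 ⟨ha, hpa⟩
  have hb' : b ∈ l.filter p := List.mem_filter.2 ⟨hb, hpb⟩
  rw [List.countP_eq_length_filter]
  have hsub : ({a, b} : Finset (ℤ × ℤ)) ⊆ (l.filter p).toFinset := by
    intro z hz
    simp only [Finset.mem_insert, Finset.mem_singleton] at hz
    rcases hz with rfl | rfl <;> exact List.mem_toFinset.2 ‹_›
  calc 2 = ({a, b} : Finset (ℤ × ℤ)).card := by
        rw [Finset.card_insert_of_notMem (by simpa using hab), Finset.card_singleton]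
    _ ≤ (l.filter p).toFinset.card := Finset.card_le_card hsub
    _ ≤ (l.filter p).length := (l.filter p).toFinset_card_le

-- ### the deterministic preservation lemma

lemma det_preserve (R : (ℤ × ℤ) → Set ℝ) (F : ℝ → Config) (t s : ℝ)
    (ht : 0 ≤ t) (hts : t ≤ s)
    (hT : IsMajorityTrajectory R F)
    (hLF : ∀ x : ℤ × ℤ, (R x ∩ Set.Ioc t s).Finite)
    (hNC : ¬ ∃ (g : ℕ → ℤ × ℤ) (r : ℕ → ℝ), Function.Injective g ∧
      (∀ k, Adj (g k) (g (k + 1))) ∧ (∀ k, r k ∈ R (g k) ∧ r k ∈ Set.Ioc t s) ∧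
      (StrictMono r ∨ StrictAnti r)) :
    Percolates (F t) → Percolates (F s) := by
  obtain ⟨hC1, hC2⟩ := hT
  rintro ⟨f, hinj, hadj, hopen⟩
  set flip : (ℤ × ℤ) → Set ℝ := fun x => {ρ | ρ ∈ R x ∧ ρ ∈ Set.Ioc t s ∧ F ρ x ≠ F t x}
    with hflipdef
  have hflipFin : ∀ x, (flip x).Finite :=
    fun x => (hLF x).subset (fun ρ hρ => ⟨hρ.1, hρ.2.1⟩)
  -- L2 : a change of opinion happens at some ring
  have L2 : ∀ x u, t < u → u ≤ s → F u x ≠ F t x → ∃ ρ ∈ flip x, ρ ≤ u := by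
    intro x u htu hus hne
    by_contra hcon
    push_neg at hcon
    set A := R x ∩ Set.Ioc t u with hA
    have hAfin : A.Finite :=
      (hLF x).subset (fun ρ hρ => ⟨hρ.1, hρ.2.1, le_trans hρ.2.2 hus⟩)
    have hAflip : ∀ ρ ∈ A, F ρ x = F t x := by
      intro ρ hρ
      by_contra hρne
      exact absurd hρ.2.2 (not_le.2 (hcon ρ ⟨hρ.1, ⟨hρ.2.1, le_trans hρ.2.2 hus⟩, hρne⟩))
    rcases A.eq_empty_or_nonempty with hAe | hAne
    · refine hne (hC1 x t u ht htu.le (fun r hr => ?_))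
      by_cases h1 : r ≤ t
      · exact Or.inl h1
      · refine Or.inr ?_
        by_contra h2
        push_neg at h2
        exact (Set.eq_empty_iff_forall_notMem.1 hAe r) ⟨hr, lt_of_not_ge h1, h2⟩
    · set ρm := sSup A with hρm
      have hmem : ρm ∈ A := hAne.csSup_mem hAfin
      have h1 : F u x = F ρm x := by
        refine hC1 x ρm u (le_trans ht hmem.2.1.le) hmem.2.2 (fun r hr => ?_)
        by_cases hr1 : r ≤ ρm
        · exact Or.inl hr1
        · refine Or.inr ?_
          by_contra hr2
          push_neg at hr2
          have : r ∈ A := ⟨hr, lt_of_le_of_lt hmem.2.1.le (lt_of_not_ge hr1), hr2⟩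
          exact hr1 (le_csSup hAfin.bddAbove this)
      exact hne (h1.trans (hAflip ρm hmem))
  -- L4 : no early flip means the opinion at time t persists
  have L4 : ∀ x u, t ≤ u → u ≤ s → (∀ ρ ∈ flip x, u < ρ) → F u x = F t x := by
    intro x u htu hus hno
    rcases eq_or_lt_of_le htu with rfl | hlt
    · rfl
    · by_contra hne
      obtain ⟨ρ, hρ, hρle⟩ := L2 x u hlt hus hne
      exact absurd hρle (not_le.2 (hno ρ hρ))
  set D : ℕ → Prop := fun i => (flip (f i)).Nonempty with hD
  set τ : ℕ → ℝ := fun i => sInf (flip (f i)) with hτ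
  have hτmem : ∀ i, D i → τ i ∈ flip (f i) := fun i hi => hi.csInf_mem (hflipFin _)
  have hτle : ∀ i, ∀ ρ ∈ flip (f i), τ i ≤ ρ :=
    fun i ρ hρ => csInf_le (hflipFin _).bddBelow hρ
  -- L5 : a flip of an interior site requires an earlier flip of a path neighbour
  have L5 : ∀ i, D (i + 1) → (D i ∧ τ i < τ (i + 1)) ∨ (D (i + 2) ∧ τ (i + 2) < τ (i + 1)) := by
    intro i hi
    obtain ⟨hρR, hρIoc, hρflip⟩ := hτmem (i + 1) hi
    obtain ⟨ε, hε, hmaj⟩ := hC2 (f (i + 1)) (τ (i + 1)) hρR (lt_of_le_of_lt ht hρIoc.1)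
    set ρ := τ (i + 1) with hρdef
    set s' := max (ρ - ε / 2) ((ρ + t) / 2) with hs'
    have htρ : t < ρ := hρIoc.1
    have hs1 : s' < ρ := max_lt (by linarith) (by linarith)
    have hs2 : ρ - ε < s' := lt_of_lt_of_le (by linarith) (le_max_left _ _)
    have hs3 : t < s' := lt_of_lt_of_le (by linarith) (le_max_right _ _)
    have hs4 : s' ≤ s := le_trans hs1.le hρIoc.2
    have hFs' : F s' (f (i + 1)) = F t (f (i + 1)) :=
      L4 _ _ hs3.le hs4 (fun ρ' hρ' => lt_of_lt_of_le hs1 (hτle _ _ hρ'))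
    have hopen1 : F t (f (i + 1)) = true := hopen (i + 1)
    have hρfalse : F ρ (f (i + 1)) = false := by
      cases h : F ρ (f (i + 1)) with
      | true => exact absurd (h.trans hopen1.symm) hρflip
      | false => rfl
    have hmaj' : F ρ (f (i + 1)) = majUpdate (F s') (f (i + 1)) := hmaj s' hs2 hs1
    have hcnt : onesCount (F s') (f (i + 1)) ≤ 1 := by
      rw [hρfalse, majUpdate] at hmaj'
      by_contra hc
      push_neg at hc
      rcases le_or_gt 3 (onesCount (F s') (f (i + 1))) with h3 | h3
      · rw [if_pos h3] at hmaj'; exact Bool.false_ne_true hmaj'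
      · rw [if_neg (not_le.2 h3), if_neg (not_le.2 hc), hFs', hopen1] at hmaj'
        exact Bool.false_ne_true hmaj'
    have hnb1 : f i ∈ nbrs (f (i + 1)) := mem_nbrs_of_adj (adj_symm (hadj i))
    have hnb2 : f (i + 2) ∈ nbrs (f (i + 1)) := mem_nbrs_of_adj (hadj (i + 1))
    have hne12 : f i ≠ f (i + 2) := fun h => by have := hinj h; omega
    have key : F s' (f i) = false ∨ F s' (f (i + 2)) = false := by
      by_contra hcon
      push_neg at hcon
      have h1 : F s' (f i) = true := by
        cases h : F s' (f i) with
        | true => rfl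
        | false => exact absurd h hcon.1
      have h2 : F s' (f (i + 2)) = true := by
        cases h : F s' (f (i + 2)) with
        | true => rfl
        | false => exact absurd h hcon.2
      have := two_le_countP (p := fun y => F s' y) hnb1 hnb2 hne12 h1 h2
      rw [onesCount] at hcnt
      omega
    rcases key with hk | hk
    · left
      have hflip0 : ∃ ρ' ∈ flip (f i), ρ' ≤ s' := by
        refine L2 _ _ hs3 hs4 ?_
        rw [hk, hopen i]
        exact Bool.false_ne_true
      obtain ⟨ρ', hρ', hle⟩ := hflip0
      exact ⟨⟨ρ', hρ'⟩, lt_of_le_of_lt (hτle _ _ hρ') (lt_of_le_of_lt hle hs1)⟩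
    · right
      have hflip0 : ∃ ρ' ∈ flip (f (i + 2)), ρ' ≤ s' := by
        refine L2 _ _ hs3 hs4 ?_
        rw [hk, hopen (i + 2)]
        exact Bool.false_ne_true
      obtain ⟨ρ', hρ', hle⟩ := hflip0
      exact ⟨⟨ρ', hρ'⟩, lt_of_le_of_lt (hτle _ _ hρ') (lt_of_le_of_lt hle hs1)⟩
  by_cases hM : ∃ M, ∀ i, M ≤ i → ¬ D i
  · obtain ⟨M, hM⟩ := hM
    refine ⟨fun j => f (M + j), hinj.comp (add_right_injective M), fun j => hadj _, fun j => ?_⟩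
    have : F s (f (M + j)) = F t (f (M + j)) := by
      refine L4 _ _ hts le_rfl (fun ρ hρ => absurd ⟨ρ, hρ⟩ (hM (M + j) (Nat.le_add_right _ _)))
    rw [this]; exact hopen _
  · push_neg at hM
    by_cases hA : ∃ i, D i ∧ D (i + 1) ∧ τ (i + 1) < τ i
    · obtain ⟨i, hDi, hDi1, hlt⟩ := hA
      have claim : ∀ k, D (i + k) ∧ D (i + k + 1) ∧ τ (i + k + 1) < τ (i + k) := by
        intro k
        induction k with
        | zero => exact ⟨hDi, hDi1, hlt⟩
        | succ k ih =>
          rcases L5 (i + k) ih.2.1 with ⟨_, h⟩ | ⟨h1, h2⟩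
          · exact absurd ih.2.2 (lt_asymm h)
          · exact ⟨ih.2.1, h1, h2⟩
      exfalso
      apply hNC
      refine ⟨fun k => f (i + 1 + k), fun k => τ (i + 1 + k),
        hinj.comp (add_right_injective _), fun k => ?_, fun k => ?_, Or.inr ?_⟩
      · have := hadj (i + 1 + k)
        rwa [show i + 1 + k + 1 = i + 1 + (k + 1) from by omega] at this
      · have h := hτmem (i + 1 + k) (by
          have := (claim k).2.1
          rwa [show i + k + 1 = i + 1 + k from by omega] at this)
        exact ⟨h.1, h.2.1⟩
      · refine strictAnti_nat_of_succ_lt (fun k => ?_)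
        have := (claim (k + 1)).2.2
        rw [show i + (k + 1) + 1 = i + 1 + (k + 1) from by omega,
          show i + (k + 1) = i + 1 + k from by omega] at this
        exact this
    · push_neg at hA
      have step : ∀ i, D (i + 1) → D i ∧ τ i < τ (i + 1) := by
        intro i hi
        rcases L5 i hi with h | ⟨h1, h2⟩
        · exact h
        · exact absurd h2 (not_lt.2 (hA (i + 1) hi h1))
      have down : ∀ j i, D (i + j) → D i := by
        intro j
        induction j with
        | zero => exact fun i h => h
        | succ j ih =>
          intro i h
          rw [show i + (j + 1) = (i + 1) + j from by omega] at h
          exact (step i (ih (i + 1) h)).1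
      have all : ∀ i, D i := by
        intro i
        obtain ⟨j, hij, hDj⟩ := hM i
        refine down (j - i) i ?_
        rwa [show i + (j - i) = j from by omega]
      exfalso
      apply hNC
      refine ⟨f, τ, hinj, hadj, fun k => ?_, Or.inl ?_⟩
      · have := hτmem k (all k)
        exact ⟨this.1, this.2.1⟩
      · exact strictMono_nat_of_lt_succ (fun n => (step n (all (n + 1))).2)


section Law

variable {Ω : Type*} [MeasurableSpace Ω] {P : Measure Ω} [IsProbabilityMeasure P]
  {G : (ℤ × ℤ) → ℕ → Ω → ℝ} {U : (ℤ × ℤ) → Ω → ℝ}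

lemma law_le (hexp : ∀ x n, ∀ s : ℝ, 0 ≤ s → (P {ω | G x n ω ≤ s}).toReal = 1 - Real.exp (-s))
    (x : ℤ × ℤ) (n : ℕ) {u : ℝ} (hu : 0 ≤ u) :
    P {ω | G x n ω ≤ u} = ENNReal.ofReal (1 - Real.exp (-u)) := by
  rw [← hexp x n u hu, ENNReal.ofReal_toReal (measure_ne_top P _)]

lemma law_nonpos (hexp : ∀ x n, ∀ s : ℝ, 0 ≤ s →
      (P {ω | G x n ω ≤ s}).toReal = 1 - Real.exp (-s))
    (x : ℤ × ℤ) (n : ℕ) {u : ℝ} (hu : u ≤ 0) :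
    P {ω | G x n ω ≤ u} = 0 := by
  have h0 : P {ω | G x n ω ≤ 0} = 0 := by
    rw [law_le hexp x n le_rfl]
    simp
  exact measure_mono_null (fun ω hω => le_trans hω hu) h0

lemma law_Ioc (hGmeas : ∀ x n, Measurable (G x n))
    (hexp : ∀ x n, ∀ s : ℝ, 0 ≤ s → (P {ω | G x n ω ≤ s}).toReal = 1 - Real.exp (-s))
    (x : ℤ × ℤ) (n : ℕ) (a b : ℝ) :
    P {ω | G x n ω ∈ Set.Ioc a b} ≤ ENNReal.ofReal (b - a) := by
  rcases le_or_gt b a with hba | hab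
  · have : {ω | G x n ω ∈ Set.Ioc a b} = ∅ := by
      ext ω; simp only [mem_setOf_eq, Set.mem_Ioc, Set.mem_empty_iff_false, iff_false, not_and,
        not_le]
      intro h; linarith
    exact le_trans (le_of_eq (by rw [this]; exact measure_empty)) (zero_le)
  · have hdiff : {ω | G x n ω ∈ Set.Ioc a b} = {ω | G x n ω ≤ b} \ {ω | G x n ω ≤ a} := by
      ext ω; simp only [mem_setOf_eq, Set.mem_Ioc, Set.mem_diff, not_le]
      constructor
      · rintro ⟨h1, h2⟩; exact ⟨h2, h1⟩
      · rintro ⟨h1, h2⟩; exact ⟨h2, h1⟩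
    rcases le_or_gt b 0 with hb0 | hb0
    · have : P {ω | G x n ω ∈ Set.Ioc a b} ≤ P {ω | G x n ω ≤ b} :=
        measure_mono (fun ω hω => hω.2)
      rw [law_nonpos hexp x n hb0] at this
      exact le_trans this (zero_le)
    rcases le_or_gt a 0 with ha0 | ha0
    · have h1 : P {ω | G x n ω ∈ Set.Ioc a b} ≤ P {ω | G x n ω ≤ b} :=
        measure_mono (fun ω hω => hω.2)
      rw [law_le hexp x n hb0.le] at h1
      refine le_trans h1 (ENNReal.ofReal_le_ofReal ?_)
      have := Real.add_one_le_exp (-b)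
      linarith
    · have hd := measure_diff (μ := P) (s₁ := {ω | G x n ω ≤ b}) (s₂ := {ω | G x n ω ≤ a})
        (fun ω hω => le_trans hω hab.le)
        ((hGmeas x n) measurableSet_Iic).nullMeasurableSet (measure_ne_top P _)
      rw [hdiff, hd, law_le hexp x n hb0.le, law_le hexp x n ha0.le,
        ← ENNReal.ofReal_sub _ (by have := Real.exp_le_one_iff.2 (neg_nonpos.2 ha0.le); linarith)]
      refine ENNReal.ofReal_le_ofReal ?_
      have h1 : Real.exp (-b) = Real.exp (-a) * Real.exp (a - b) := by
        rw [← Real.exp_add]; ring_nf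
      have h2 : (a - b) + 1 ≤ Real.exp (a - b) := Real.add_one_le_exp _
      have h3 : Real.exp (-a) ≤ 1 := Real.exp_le_one_iff.2 (by linarith)
      have h4 : (0:ℝ) < Real.exp (-a) := Real.exp_pos _
      nlinarith

end Law

section Conv

variable {Ω : Type*} [MeasurableSpace Ω] {P : Measure Ω} [IsProbabilityMeasure P]
  {G : (ℤ × ℤ) → ℕ → Ω → ℝ} {U : (ℤ × ℤ) → Ω → ℝ}

lemma sum_Ioc_le (hGmeas : ∀ x n, Measurable (G x n)) (hUmeas : ∀ x, Measurable (U x))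
    (hindep : iIndepFun
      (Sum.elim (fun q : (ℤ × ℤ) × ℕ => G q.1 q.2) U) P)
    (hexp : ∀ x n, ∀ s : ℝ, 0 ≤ s → (P {ω | G x n ω ≤ s}).toReal = 1 - Real.exp (-s))
    (x : ℤ × ℤ) (n : ℕ) (a b : ℝ) :
    P {ω | (∑ i ∈ Finset.range (n + 1), G x i ω) ∈ Set.Ioc a b} ≤ ENNReal.ofReal (b - a) := by
  classical
  rcases Nat.eq_zero_or_pos n with rfl | hn
  · simp only [zero_add, Finset.sum_range_one]
    exact law_Ioc hGmeas hexp x 0 a b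
  set ι := ((ℤ × ℤ) × ℕ) ⊕ (ℤ × ℤ)
  set f : ι → Ω → ℝ := Sum.elim (fun q : (ℤ × ℤ) × ℕ => G q.1 q.2) U with hf
  have hfmeas : ∀ i, Measurable (f i) := by
    rintro (q | y)
    · exact hGmeas q.1 q.2
    · exact hUmeas y
  set X : Ω → ℝ := fun ω => ∑ i ∈ Finset.range n, G x i ω with hX
  set Y : Ω → ℝ := G x n with hY
  have hXmeas : Measurable X := Finset.measurable_sum _ (fun i _ => hGmeas x i)
  have hYmeas : Measurable Y := hGmeas x n
  -- independence of X and Y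
  set S : Finset ι := (Finset.range n).image (fun i => Sum.inl (x, i)) with hS
  set T : Finset ι := {Sum.inl (x, n)} with hT
  have hST : Disjoint S T := by
    rw [Finset.disjoint_right]
    intro j hjT hjS
    rw [hT, Finset.mem_singleton] at hjT
    rw [hS, Finset.mem_image] at hjS
    obtain ⟨i, hi, hij⟩ := hjS
    rw [hjT] at hij
    have hin : i = n := by
      injection hij with hq
      exact congrArg Prod.snd hq
    rw [hin] at hi
    simp at hi
  have hbase := hindep.indepFun_finset S T hST hfmeas
  set φ : ((j : S) → ℝ) → ℝ := fun v => ∑ j ∈ S.attach, v j with hφ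
  set ψ : ((j : T) → ℝ) → ℝ := fun v => v ⟨Sum.inl (x, n), Finset.mem_singleton_self _⟩ with hψ
  have hφm : Measurable φ := Finset.measurable_sum _ (fun j _ => measurable_pi_apply j)
  have hψm : Measurable ψ := measurable_pi_apply _
  have hXY : IndepFun X Y P := by
    have h := hbase.comp hφm hψm
    have heq1 : (φ ∘ fun a (i : S) => f i a) = X := by
      funext ω
      simp only [Function.comp_apply, hφ]
      rw [Finset.sum_attach S (fun j => f j ω), hS,
        Finset.sum_image (by intro i _ j _ h; injection h with hq; exact congrArg Prod.snd hq)]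
      rfl
    have heq2 : (ψ ∘ fun a (i : T) => f i a) = Y := rfl
    rwa [heq1, heq2] at h
  have hmap : P.map (fun ω => (X ω, Y ω)) = (P.map X).prod (P.map Y) :=
    (indepFun_iff_map_prod_eq_prod_map_map hXmeas.aemeasurable hYmeas.aemeasurable).1 hXY
  have hsetm : MeasurableSet {p : ℝ × ℝ | p.1 + p.2 ∈ Set.Ioc a b} :=
    (measurable_fst.add measurable_snd) measurableSet_Ioc
  have hev : {ω | (∑ i ∈ Finset.range (n + 1), G x i ω) ∈ Set.Ioc a b} =
      (fun ω => (X ω, Y ω)) ⁻¹' {p : ℝ × ℝ | p.1 + p.2 ∈ Set.Ioc a b} := by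
    ext ω
    simp only [mem_setOf_eq, Set.mem_preimage, Finset.sum_range_succ]
    exact Iff.rfl
  rw [hev, ← Measure.map_apply (hXmeas.prodMk hYmeas) hsetm, hmap,
    Measure.prod_apply hsetm]
  have hslice : ∀ u : ℝ, (P.map Y) (Prod.mk u ⁻¹' {p : ℝ × ℝ | p.1 + p.2 ∈ Set.Ioc a b})
      ≤ ENNReal.ofReal (b - a) := by
    intro u
    have h1 : (Prod.mk u ⁻¹' {p : ℝ × ℝ | p.1 + p.2 ∈ Set.Ioc a b}) = Set.Ioc (a - u) (b - u) := by
      ext v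
      simp only [Set.mem_preimage, mem_setOf_eq, Set.mem_Ioc]
      constructor
      · rintro ⟨h1, h2⟩; constructor <;> linarith
      · rintro ⟨h1, h2⟩; constructor <;> linarith
    rw [h1, Measure.map_apply hYmeas measurableSet_Ioc]
    have := law_Ioc hGmeas hexp x n (a - u) (b - u)
    have heq : {ω | G x n ω ∈ Set.Ioc (a - u) (b - u)} = Y ⁻¹' Set.Ioc (a - u) (b - u) := rfl
    rw [heq] at this
    convert this using 2
    ring
  calc ∫⁻ u, (P.map Y) (Prod.mk u ⁻¹' {p : ℝ × ℝ | p.1 + p.2 ∈ Set.Ioc a b}) ∂(P.map X)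
      ≤ ∫⁻ _, ENNReal.ofReal (b - a) ∂(P.map X) := lintegral_mono hslice
    _ = ENNReal.ofReal (b - a) := by
        have : IsProbabilityMeasure (P.map X) := Measure.isProbabilityMeasure_map hXmeas.aemeasurable
        simp

end Conv


section Blocks

variable {Ω ι : Type*} [MeasurableSpace Ω] {P : Measure Ω} [IsProbabilityMeasure P]

lemma blocks_indep {f : ι → Ω → ℝ} (hmeas : ∀ i, Measurable (f i))
    (hindep : iIndepFun f P) :
    ∀ (m : ℕ) (S : ℕ → Finset ι) (C : (k : ℕ) → Set (↥(S k) → ℝ)),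
      (∀ k l, k < m → l < m → k ≠ l → Disjoint (S k) (S l)) →
      (∀ k, k < m → MeasurableSet (C k)) →
      P (⋂ k ∈ Finset.range m, (fun ω (i : S k) => f i ω) ⁻¹' C k) =
        ∏ k ∈ Finset.range m, P ((fun ω (i : S k) => f i ω) ⁻¹' C k) := by
  intro m
  induction m with
  | zero => intro S C _ _; simp
  | succ m ih =>
    intro S C hd hC
    classical
    set U : Finset ι := (Finset.range m).biUnion (fun k => S (k + 1)) with hU
    have hdisj : Disjoint (S 0) U := by
      rw [hU, Finset.disjoint_biUnion_right]
      intro k hk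
      rw [Finset.mem_range] at hk
      exact hd 0 (k + 1) (by omega) (by omega) (by omega)
    have hbase := hindep.indepFun_finset (S 0) U hdisj hmeas
    set D : Set ((i : U) → ℝ) := ⋂ k, ⋂ (hk : k ∈ Finset.range m),
      (fun (v : (i : U) → ℝ) (i : S (k + 1)) =>
        v ⟨i.1, Finset.mem_biUnion.2 ⟨k, hk, i.2⟩⟩) ⁻¹' C (k + 1) with hD
    have hDmeas : MeasurableSet D := by
      refine MeasurableSet.iInter (fun k => MeasurableSet.iInter (fun hk => ?_))
      have hk' : k < m := Finset.mem_range.1 hk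
      exact (measurable_pi_lambda _ (fun i => measurable_pi_apply _)) (hC (k + 1) (by omega))
    have hDeq : (fun ω (i : U) => f i ω) ⁻¹' D =
        ⋂ k ∈ Finset.range m, (fun ω (i : S (k + 1)) => f i ω) ⁻¹' C (k + 1) := by
      ext ω
      simp only [Set.mem_preimage, hD, Set.mem_iInter]
    have hsplit : (⋂ k ∈ Finset.range (m + 1), (fun ω (i : S k) => f i ω) ⁻¹' C k) =
        ((fun ω (i : S 0) => f i ω) ⁻¹' C 0) ∩ ((fun ω (i : U) => f i ω) ⁻¹' D) := by
      rw [hDeq]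
      ext ω
      simp only [Set.mem_iInter, Set.mem_inter_iff, Finset.mem_range]
      constructor
      · intro h
        exact ⟨h 0 (by omega), fun k hk => h (k + 1) (by omega)⟩
      · rintro ⟨h0, hrest⟩ k hk
        cases k with
        | zero => exact h0
        | succ k => exact hrest k (by omega)
    have hmul := (indepFun_iff_measure_inter_preimage_eq_mul.1 hbase) (C 0) D
      (hC 0 (by omega)) hDmeas
    rw [hsplit, hmul, hDeq, ih (fun k => S (k + 1)) (fun k => C (k + 1))
      (fun k l hk hl hkl => hd (k + 1) (l + 1) (by omega) (by omega) (by omega))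
      (fun k hk => hC (k + 1) (by omega)),
      Finset.prod_range_succ']
    ring

end Blocks

section Tail

variable {Ω : Type*} [MeasurableSpace Ω] {P : Measure Ω} [IsProbabilityMeasure P]
  {G : (ℤ × ℤ) → ℕ → Ω → ℝ} {U : (ℤ × ℤ) → Ω → ℝ}

lemma law_nonpos' (hexp : ∀ x n, ∀ s : ℝ, 0 ≤ s →
      (P {ω | G x n ω ≤ s}).toReal = 1 - Real.exp (-s))
    (x : ℤ × ℤ) (n : ℕ) {u : ℝ} (hu : u ≤ 0) :
    P {ω | G x n ω ≤ u} = 0 := by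
  have h0 : P {ω | G x n ω ≤ 0} = 0 := by
    have h := hexp x n 0 le_rfl
    simp only [neg_zero, Real.exp_zero, sub_self] at h
    rcases ENNReal.toReal_eq_zero_iff _ |>.1 h with h' | h'
    · exact h'
    · exact absurd h' (measure_ne_top P _)
  exact measure_mono_null (fun ω hω => le_trans hω hu) h0

lemma law_le' (hexp : ∀ x n, ∀ s : ℝ, 0 ≤ s → (P {ω | G x n ω ≤ s}).toReal = 1 - Real.exp (-s))
    (x : ℤ × ℤ) (n : ℕ) {u : ℝ} (hu : 0 ≤ u) :
    P {ω | G x n ω ≤ u} = ENNReal.ofReal (1 - Real.exp (-u)) := by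
  rw [← hexp x n u hu, ENNReal.ofReal_toReal (measure_ne_top P _)]

lemma tail_bound (hGmeas : ∀ x n, Measurable (G x n)) (hUmeas : ∀ x, Measurable (U x))
    (hindep : iIndepFun
      (Sum.elim (fun q : (ℤ × ℤ) × ℕ => G q.1 q.2) U) P)
    (hexp : ∀ x n, ∀ s : ℝ, 0 ≤ s → (P {ω | G x n ω ≤ s}).toReal = 1 - Real.exp (-s))
    (c : ℝ) (hc : 0 ≤ c) {ε : ℝ} (hε : 0 < ε) :
    ∃ N : ℕ, ∀ y : ℤ × ℤ,
      P {ω | (∑ i ∈ Finset.range (N + 1), G y i ω) ≤ c} ≤ ENNReal.ofReal ε := by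
  classical
  set ι := ((ℤ × ℤ) × ℕ) ⊕ (ℤ × ℤ) with hι
  set f : ι → Ω → ℝ := Sum.elim (fun q : (ℤ × ℤ) × ℕ => G q.1 q.2) U with hf
  set K : ℕ := ⌊c⌋₊ + 1 with hK
  set β : ℝ := 1 - Real.exp (-1) with hβ
  have hβ0 : 0 ≤ β := by
    have : Real.exp (-1) ≤ 1 := Real.exp_le_one_iff.2 (by norm_num)
    simp only [hβ]; linarith
  have hβ1 : β < 1 := by
    have : 0 < Real.exp (-1) := Real.exp_pos _
    simp only [hβ]; linarith
  -- the quantitative bound tends to zero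
  have hsum : Summable (fun n : ℕ => (n : ℝ) ^ K * β ^ n) := by
    refine summable_pow_mul_geometric_of_norm_lt_one K ?_
    rw [Real.norm_eq_abs, abs_of_nonneg hβ0]
    exact hβ1
  have htend0 : Filter.Tendsto (fun n : ℕ => (n : ℝ) ^ K * β ^ n) Filter.atTop (nhds 0) :=
    hsum.tendsto_atTop_zero
  have htend1 : Filter.Tendsto (fun N : ℕ => ((N + 1 : ℕ) : ℝ) ^ K * β ^ (N + 1))
      Filter.atTop (nhds 0) := htend0.comp (Filter.tendsto_add_atTop_nat 1)
  have htend : Filter.Tendsto (fun N : ℕ => (((N + 1 : ℕ) : ℝ) ^ K * β ^ (N + 1)) / β ^ K)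
      Filter.atTop (nhds 0) := by
    simpa using htend1.div_const (β ^ K)
  have hev : ∀ᶠ N : ℕ in Filter.atTop,
      (((N + 1 : ℕ) : ℝ) ^ K * β ^ (N + 1)) / β ^ K < ε :=
    htend.eventually_lt_const hε
  obtain ⟨N, hNK, hNε⟩ : ∃ N : ℕ, K ≤ N ∧
      (((N + 1 : ℕ) : ℝ) ^ K * β ^ (N + 1)) / β ^ K < ε := by
    obtain ⟨N0, hN0⟩ := Filter.eventually_atTop.1 hev
    exact ⟨max N0 K, le_max_right _ _, hN0 _ (le_max_left _ _)⟩
  have hβpos : 0 < β := by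
    have h1 : Real.exp (-1) < 1 := by
      rw [Real.exp_lt_one_iff]; norm_num
    simp only [hβ]; linarith
  refine ⟨N, fun y => ?_⟩
  set SN : Ω → ℝ := fun ω => ∑ i ∈ Finset.range (N + 1), G y i ω with hSN
  set E0 : Set Ω := ⋃ i ∈ Finset.range (N + 1), {ω | G y i ω ≤ 0} with hE0
  have hE0null : P E0 = 0 := by
    refine measure_mono_null ?_
      (measure_iUnion_null (fun i : ℕ => law_nonpos' (P := P) hexp y i le_rfl))
    exact Set.iUnion₂_subset (fun i _ => Set.subset_iUnion (fun i => {ω | G y i ω ≤ 0}) i)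
  have hsub : {ω | SN ω ≤ c} \ E0 ⊆
      ⋃ T ∈ Finset.powersetCard (N + 1 - K) (Finset.range (N + 1)),
        ⋂ i ∈ T, {ω | G y i ω ≤ 1} := by
    intro ω hω
    obtain ⟨hωc, hωE⟩ := hω
    have hpos : ∀ i ∈ Finset.range (N + 1), 0 < G y i ω := by
      intro i hi
      by_contra hcon
      exact hωE (Set.mem_biUnion hi (by simpa using not_lt.1 hcon))
    set Bad : Finset ℕ := (Finset.range (N + 1)).filter (fun i => 1 < G y i ω) with hBad
    have hcard : Bad.card ≤ ⌊c⌋₊ := by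
      refine Nat.le_floor ?_
      have h1 : (Bad.card : ℝ) • (1 : ℝ) ≤ ∑ i ∈ Bad, G y i ω := by
        have := Finset.card_nsmul_le_sum Bad (fun i => G y i ω) 1
          (fun i hi => le_of_lt (Finset.mem_filter.1 hi).2)
        simpa using this
      have h2 : ∑ i ∈ Bad, G y i ω ≤ SN ω := by
        refine Finset.sum_le_sum_of_subset_of_nonneg (Finset.filter_subset _ _) ?_
        intro i hi _
        exact (hpos i hi).le
      simp only [smul_eq_mul, mul_one] at h1
      have hc' : SN ω ≤ c := hωc
      linarith
    have hGood : N + 1 - K ≤ ((Finset.range (N + 1)) \ Bad).card := by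
      have h3 : ((Finset.range (N + 1)) \ Bad).card =
          (N + 1) - Bad.card := by
        rw [Finset.card_sdiff_of_subset (Finset.filter_subset _ _), Finset.card_range]
      omega
    obtain ⟨T, hTsub, hTcard⟩ := Finset.exists_subset_card_eq hGood
    simp only [Set.mem_iUnion]
    refine ⟨T, ?_, ?_⟩
    · rw [Finset.mem_powersetCard]
      exact ⟨hTsub.trans (Finset.sdiff_subset), hTcard⟩
    · refine Set.mem_biInter (fun i hi => ?_)
      have := hTsub hi
      rw [Finset.mem_sdiff, hBad, Finset.mem_filter] at this
      have := this.2
      simp only [mem_setOf_eq]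
      by_contra hcon
      exact this ⟨Finset.mem_sdiff.1 (hTsub hi) |>.1, lt_of_not_ge hcon⟩
  -- the probability of each intersection
  have hprodT : ∀ T ∈ Finset.powersetCard (N + 1 - K) (Finset.range (N + 1)),
      P (⋂ i ∈ T, {ω | G y i ω ≤ 1}) = ENNReal.ofReal β ^ (N + 1 - K) := by
    intro T hT
    have hTcard : T.card = N + 1 - K := (Finset.mem_powersetCard.1 hT).2
    set S' : Finset ι := T.image (fun i => Sum.inl (y, i)) with hS'
    have hinj : ∀ i ∈ T, ∀ j ∈ T, (Sum.inl (y, i) : ι) = Sum.inl (y, j) → i = j := by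
      intro i _ j _ h
      injection h with hq
      exact congrArg Prod.snd hq
    have hkey := hindep.measure_inter_preimage_eq_mul S' (sets := fun _ => Set.Iic 1)
      (fun i _ => measurableSet_Iic)
    have hset : (⋂ j ∈ S', f j ⁻¹' Set.Iic 1) = ⋂ i ∈ T, {ω | G y i ω ≤ 1} := by
      ext ω
      simp only [Set.mem_iInter, hS', Finset.mem_image, Set.mem_preimage, Set.mem_Iic,
        mem_setOf_eq]
      constructor
      · intro h i hi
        exact h _ ⟨i, hi, rfl⟩
      · rintro h j ⟨i, hi, rfl⟩
        exact h i hi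
    rw [hset] at hkey
    rw [hkey, Finset.prod_image hinj]
    have : ∀ i ∈ T, P (f (Sum.inl (y, i)) ⁻¹' Set.Iic 1) = ENNReal.ofReal β := by
      intro i _
      have : (f (Sum.inl (y, i)) ⁻¹' Set.Iic 1) = {ω | G y i ω ≤ 1} := rfl
      rw [this, law_le' hexp y i (by norm_num : (0:ℝ) ≤ 1)]
    rw [Finset.prod_congr rfl this, Finset.prod_const, hTcard]
  -- put everything together
  have hPle : P {ω | SN ω ≤ c} ≤
      ((N + 1).choose (N + 1 - K) : ENNReal) * ENNReal.ofReal β ^ (N + 1 - K) := by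
    have h1 : P {ω | SN ω ≤ c} ≤ P ({ω | SN ω ≤ c} \ E0) + P E0 := by
      refine le_trans (measure_mono ?_) (measure_union_le _ _)
      intro ω hω
      by_cases h : ω ∈ E0
      · exact Or.inr h
      · exact Or.inl ⟨hω, h⟩
    rw [hE0null, add_zero] at h1
    refine le_trans h1 (le_trans (measure_mono hsub) ?_)
    refine le_trans (measure_biUnion_finset_le _ _) ?_
    rw [Finset.sum_congr rfl hprodT, Finset.sum_const, Finset.card_powersetCard,
      Finset.card_range, nsmul_eq_mul]
  refine le_trans hPle ?_
  have hKN1 : K ≤ N + 1 := by omega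
  have hchooseN : (N + 1).choose (N + 1 - K) ≤ (N + 1) ^ K := by
    rw [Nat.choose_symm hKN1]
    exact Nat.choose_le_pow _ _
  have hchoose : ((N + 1).choose (N + 1 - K) : ℝ) ≤ ((N + 1 : ℕ) : ℝ) ^ K := by
    calc ((N + 1).choose (N + 1 - K) : ℝ) ≤ (((N + 1) ^ K : ℕ) : ℝ) := Nat.cast_le.2 hchooseN
      _ = ((N + 1 : ℕ) : ℝ) ^ K := by push_cast; ring
  have hpow : β ^ (N + 1 - K) * β ^ K = β ^ (N + 1) := by
    rw [← pow_add]; congr 1; omega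
  have hβeq : β ^ (N + 1 - K) = β ^ (N + 1) / β ^ K :=
    (eq_div_iff (pow_ne_zero _ hβpos.ne')).2 hpow
  have hreal : ((N + 1).choose (N + 1 - K) : ℝ) * β ^ (N + 1 - K) ≤ ε := by
    have h1 : ((N + 1).choose (N + 1 - K) : ℝ) * β ^ (N + 1 - K) ≤
        ((N + 1 : ℕ) : ℝ) ^ K * β ^ (N + 1 - K) :=
      mul_le_mul_of_nonneg_right hchoose (pow_nonneg hβ0 _)
    have h2 : ((N + 1 : ℕ) : ℝ) ^ K * β ^ (N + 1 - K) =
        (((N + 1 : ℕ) : ℝ) ^ K * β ^ (N + 1)) / β ^ K := by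
      rw [hβeq]; ring
    linarith [hNε]
  calc ((N + 1).choose (N + 1 - K) : ENNReal) * ENNReal.ofReal β ^ (N + 1 - K)
      = ENNReal.ofReal (((N + 1).choose (N + 1 - K) : ℝ)) *
        ENNReal.ofReal (β ^ (N + 1 - K)) := by
        rw [ENNReal.ofReal_natCast, ENNReal.ofReal_pow hβ0]
    _ = ENNReal.ofReal (((N + 1).choose (N + 1 - K) : ℝ) * β ^ (N + 1 - K)) :=
        (ENNReal.ofReal_mul (by positivity)).symm
    _ ≤ ENNReal.ofReal ε := ENNReal.ofReal_le_ofReal hreal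

end Tail


-- ### chain machinery

def step2 (z : ℤ × ℤ) (c : Fin 4) : ℤ × ℤ :=
  if c = 0 then (z.1 + 1, z.2) else if c = 1 then (z.1 - 1, z.2)
  else if c = 2 then (z.1, z.2 + 1) else (z.1, z.2 - 1)

lemma adj_step {x y : ℤ × ℤ} (h : Adj x y) : ∃ c : Fin 4, step2 x c = y := by
  rcases x with ⟨a, b⟩; rcases y with ⟨c, d⟩
  simp only [Adj] at h
  have hcase : (c = a + 1 ∧ d = b) ∨ (c = a - 1 ∧ d = b) ∨ (c = a ∧ d = b + 1) ∨
      (c = a ∧ d = b - 1) := by omega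
  rcases hcase with ⟨h1, h2⟩ | ⟨h1, h2⟩ | ⟨h1, h2⟩ | ⟨h1, h2⟩
  · exact ⟨0, by simp [step2, h1, h2]⟩
  · exact ⟨1, by simp [step2, h1, h2]⟩
  · exact ⟨2, by simp [step2, h1, h2]⟩
  · exact ⟨3, by simp [step2, h1, h2]⟩

def pathOf (x : ℤ × ℤ) {m : ℕ} (d : Fin m → Fin 4) : ℕ → ℤ × ℤ :=
  fun k => Nat.rec x (fun k ih => if h : k < m then step2 ih (d ⟨k, h⟩) else ih) k

lemma pathOf_succ (x : ℤ × ℤ) {m : ℕ} (d : Fin m → Fin 4) (k : ℕ) :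
    pathOf x d (k + 1) =
      if h : k < m then step2 (pathOf x d k) (d ⟨k, h⟩) else pathOf x d k := rfl

lemma exists_encoding (m : ℕ) (p : ℕ → ℤ × ℤ) (hadj : ∀ k, k < m → Adj (p k) (p (k + 1))) :
    ∃ d : Fin m → Fin 4, ∀ k, k ≤ m → pathOf (p 0) d k = p k := by
  choose c hc using fun k : Fin m => adj_step (hadj k.1 k.2)
  refine ⟨c, fun k => ?_⟩
  induction k with
  | zero => intro _; rfl
  | succ k ih =>
    intro hk
    have hk' : k < m := by omega
    rw [pathOf_succ, dif_pos hk', ih (by omega)]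
    exact hc ⟨k, hk'⟩

section ChainNull

variable {Ω : Type*} [MeasurableSpace Ω] {P : Measure Ω} [IsProbabilityMeasure P]
  {G : (ℤ × ℤ) → ℕ → Ω → ℝ} {U : (ℤ × ℤ) → Ω → ℝ}

lemma chain_null
    (hGmeas : ∀ x n, Measurable (G x n)) (hUmeas : ∀ x, Measurable (U x))
    (hindep : iIndepFun
      (Sum.elim (fun q : (ℤ × ℤ) × ℕ => G q.1 q.2) U) P)
    (hexp : ∀ x n, ∀ s : ℝ, 0 ≤ s → (P {ω | G x n ω ≤ s}).toReal = 1 - Real.exp (-s))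
    (t s : ℝ) (ht : 0 ≤ t) (hts : t ≤ s) :
    P ({ω | ∃ (g : ℕ → ℤ × ℤ) (r : ℕ → ℝ), Function.Injective g ∧
        (∀ k, Adj (g k) (g (k + 1))) ∧
        (∀ k, r k ∈ ringTimes G ω (g k) ∧ r k ∈ Set.Ioc t s) ∧
        (StrictMono r ∨ StrictAnti r)} ∩ {ω | ∀ x n, 0 < G x n ω}) = 0 := by
  classical
  obtain ⟨N, hN⟩ := tail_bound hGmeas hUmeas hindep hexp s (le_trans ht hts)
    (ε := 1 / 16) (by norm_num)
  set δ : ℝ := 1 / (48 * (N + 1)) with hδ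
  have hδ0 : 0 < δ := by positivity
  set aj : ℕ → ℝ := fun j => max (t + j * δ - δ) t with haj
  set bj : ℕ → ℝ := fun j => min (t + j * δ + 2 * δ) s with hbj
  have hba : ∀ j, bj j - aj j ≤ 3 * δ := by
    intro j
    have h1 : t + j * δ - δ ≤ aj j := le_max_left _ _
    have h2 : bj j ≤ t + j * δ + 2 * δ := min_le_left _ _
    linarith
  set f : ((ℤ × ℤ) × ℕ) ⊕ (ℤ × ℤ) → Ω → ℝ := Sum.elim (fun q : (ℤ × ℤ) × ℕ => G q.1 q.2) U
    with hfdef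
  have hfmeas : ∀ i, Measurable (f i) := by
    rintro (q | y)
    · exact hGmeas q.1 q.2
    · exact hUmeas y
  set Bset : ℝ → ℝ → Set (Fin (N + 1) → ℝ) := fun a b =>
    (⋃ n : Fin (N + 1), (fun v : Fin (N + 1) → ℝ =>
        ∑ i : Fin (N + 1), if (i : ℕ) ≤ (n : ℕ) then v i else 0) ⁻¹' Set.Ioc a b) ∪
      ((fun v : Fin (N + 1) → ℝ => ∑ i : Fin (N + 1), v i) ⁻¹' Set.Iic s) with hBset
  have hBmeas : ∀ a b, MeasurableSet (Bset a b) := by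
    intro a b
    refine MeasurableSet.union (MeasurableSet.iUnion (fun n => ?_)) ?_
    · refine (Finset.measurable_sum _ (fun i _ => ?_)) measurableSet_Ioc
      by_cases h : (i : ℕ) ≤ (n : ℕ)
      · simpa [h] using measurable_pi_apply i
      · simpa [h] using (measurable_const : Measurable (fun _ : Fin (N + 1) → ℝ => (0 : ℝ)))
    · exact (Finset.measurable_sum _ (fun i _ => measurable_pi_apply i)) measurableSet_Iic
  set V : (ℤ × ℤ) → Ω → (Fin (N + 1) → ℝ) := fun y ω i => G y (i : ℕ) ω with hV
  have hVchar : ∀ y a b (ω : Ω), ω ∈ V y ⁻¹' Bset a b ↔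
      ((∃ n ≤ N, (∑ i ∈ Finset.range (n + 1), G y i ω) ∈ Set.Ioc a b) ∨
        (∑ i ∈ Finset.range (N + 1), G y i ω) ≤ s) := by
    intro y a b ω
    have hsum : ∀ n : ℕ, n ≤ N →
        (∑ i : Fin (N + 1), if (i : ℕ) ≤ n then G y (i : ℕ) ω else 0) =
          ∑ i ∈ Finset.range (n + 1), G y i ω := by
      intro n hn
      rw [Fin.sum_univ_eq_sum_range (fun j => if j ≤ n then G y j ω else 0) (N + 1),
        ← Finset.sum_filter]
      congr 1
      ext j
      simp only [Finset.mem_filter, Finset.mem_range]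
      omega
    have hsumN : (∑ i : Fin (N + 1), G y (i : ℕ) ω) = ∑ i ∈ Finset.range (N + 1), G y i ω :=
      Fin.sum_univ_eq_sum_range (fun j => G y j ω) (N + 1)
    simp only [Set.mem_preimage, hBset, Set.mem_union, Set.mem_iUnion, Set.mem_preimage, hV]
    constructor
    · rintro (⟨n, hn⟩ | h)
      · left
        refine ⟨(n : ℕ), by omega, ?_⟩
        rwa [hsum (n : ℕ) (by omega)] at hn
      · right
        rwa [hsumN] at h
    · rintro (⟨n, hn, hmem⟩ | h)
      · left
        refine ⟨⟨n, by omega⟩, ?_⟩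
        rwa [hsum n hn]
      · right
        rwa [← hsumN] at h
  have hq : ∀ y a b, b - a ≤ 3 * δ → P (V y ⁻¹' Bset a b) ≤ ENNReal.ofReal (1 / 8) := by
    intro y a b hab
    have hsub : V y ⁻¹' Bset a b ⊆
        (⋃ n ∈ Finset.range (N + 1),
          {ω | (∑ i ∈ Finset.range (n + 1), G y i ω) ∈ Set.Ioc a b}) ∪
          {ω | (∑ i ∈ Finset.range (N + 1), G y i ω) ≤ s} := by
      intro ω hω
      rcases (hVchar y a b ω).1 hω with ⟨n, hn, hmem⟩ | hmem
      · exact Or.inl (Set.mem_biUnion (Finset.mem_range.2 (by omega)) hmem)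
      · exact Or.inr hmem
    refine le_trans (measure_mono hsub) (le_trans (measure_union_le _ _) ?_)
    have h1 : P (⋃ n ∈ Finset.range (N + 1),
        {ω | (∑ i ∈ Finset.range (n + 1), G y i ω) ∈ Set.Ioc a b}) ≤
        ENNReal.ofReal (1 / 16) := by
      refine le_trans (measure_biUnion_finset_le _ _) ?_
      have hterm : ∀ n ∈ Finset.range (N + 1),
          P {ω | (∑ i ∈ Finset.range (n + 1), G y i ω) ∈ Set.Ioc a b} ≤
            ENNReal.ofReal (3 * δ) := by
        intro n _
        refine le_trans (sum_Ioc_le hGmeas hUmeas hindep hexp y n a b) ?_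
        exact ENNReal.ofReal_le_ofReal (by linarith)
      refine le_trans (Finset.sum_le_sum hterm) ?_
      rw [Finset.sum_const, Finset.card_range, nsmul_eq_mul]
      rw [← ENNReal.ofReal_natCast (N + 1), ← ENNReal.ofReal_mul (by positivity)]
      refine ENNReal.ofReal_le_ofReal ?_
      rw [hδ]
      have hN1 : (0 : ℝ) < (N : ℝ) + 1 := by positivity
      have hcast : ((N + 1 : ℕ) : ℝ) = (N : ℝ) + 1 := by push_cast; ring
      rw [hcast, show ((N : ℝ) + 1) * (3 * (1 / (48 * ((N : ℝ) + 1)))) = 3 / 48 from by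
        field_simp]
      norm_num
    have h2 : P {ω | (∑ i ∈ Finset.range (N + 1), G y i ω) ≤ s} ≤ ENNReal.ofReal (1 / 16) :=
      hN y
    calc P (⋃ n ∈ Finset.range (N + 1),
          {ω | (∑ i ∈ Finset.range (n + 1), G y i ω) ∈ Set.Ioc a b}) +
          P {ω | (∑ i ∈ Finset.range (N + 1), G y i ω) ≤ s}
        ≤ ENNReal.ofReal (1 / 16) + ENNReal.ofReal (1 / 16) := add_le_add h1 h2
      _ = ENNReal.ofReal (1 / 8) := by
          rw [← ENNReal.ofReal_add (by norm_num) (by norm_num)]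
          norm_num
  -- product over an injective path
  have hblocks : ∀ (m : ℕ) (p : ℕ → ℤ × ℤ),
      (∀ k l, k ≤ m → l ≤ m → p k = p l → k = l) → ∀ a b,
      P (⋂ k ∈ Finset.range (m + 1), V (p k) ⁻¹' Bset a b) =
        ∏ k ∈ Finset.range (m + 1), P (V (p k) ⁻¹' Bset a b) := by
    intro m p hp a b
    set S : ℕ → Finset (((ℤ × ℤ) × ℕ) ⊕ (ℤ × ℤ)) := fun k =>
      (Finset.range (N + 1)).image (fun i => Sum.inl (p k, i)) with hS
    set C : (k : ℕ) → Set (↥(S k) → ℝ) := fun k =>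
      (fun (v : ↥(S k) → ℝ) (i : Fin (N + 1)) =>
        v ⟨Sum.inl (p k, (i : ℕ)),
          Finset.mem_image.2 ⟨(i : ℕ), Finset.mem_range.2 i.isLt, rfl⟩⟩) ⁻¹' Bset a b with hC
    have hSdisj : ∀ k l, k < m + 1 → l < m + 1 → k ≠ l → Disjoint (S k) (S l) := by
      intro k l hk hl hkl
      rw [Finset.disjoint_left]
      intro j hjk hjl
      simp only [hS, Finset.mem_image] at hjk hjl
      obtain ⟨i1, _, rfl⟩ := hjk
      obtain ⟨i2, _, heq⟩ := hjl
      injection heq with hq2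
      exact hkl (hp k l (by omega) (by omega) (congrArg Prod.fst hq2).symm)
    have hCmeas : ∀ k, k < m + 1 → MeasurableSet (C k) :=
      fun k _ => (measurable_pi_lambda _ (fun i => measurable_pi_apply _)) (hBmeas a b)
    have happ := blocks_indep hfmeas hindep (m + 1) S C hSdisj hCmeas
    have hident : ∀ k, (fun ω (i : ↥(S k)) => f i ω) ⁻¹' C k = V (p k) ⁻¹' Bset a b := by
      intro k
      rfl
    simp only [hident] at happ
    exact happ
  set layer : (ℤ × ℤ) → ℕ → ℕ → Set Ω := fun x j m =>
    ⋃ d ∈ (Finset.univ : Finset (Fin m → Fin 4)).filter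
        (fun d => ∀ k l, k ≤ m → l ≤ m → pathOf x d k = pathOf x d l → k = l),
      ⋂ k ∈ Finset.range (m + 1), V (pathOf x d k) ⁻¹' Bset (aj j) (bj j) with hlayer
  set Wev : (ℤ × ℤ) → ℕ → Set Ω := fun x j => ⋂ m : ℕ, layer x j m with hWev
  -- each window event is null
  have hnull : ∀ (x : ℤ × ℤ) (j : ℕ), P (Wev x j) = 0 := by
    intro x j
    have hWle : ∀ m : ℕ, P (Wev x j) ≤ ENNReal.ofReal (1 / 8) * ENNReal.ofReal (1 / 2) ^ m := by
      intro m
      refine le_trans (measure_mono (Set.iInter_subset _ m)) ?_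
      rw [hlayer]
      refine le_trans (measure_biUnion_finset_le _ _) ?_
      have hper : ∀ d ∈ (Finset.univ : Finset (Fin m → Fin 4)).filter
          (fun d => ∀ k l, k ≤ m → l ≤ m → pathOf x d k = pathOf x d l → k = l),
          P (⋂ k ∈ Finset.range (m + 1), V (pathOf x d k) ⁻¹' Bset (aj j) (bj j)) ≤
            ENNReal.ofReal (1 / 8) ^ (m + 1) := by
        intro d hdmem
        have hinjd := (Finset.mem_filter.1 hdmem).2
        rw [hblocks m (pathOf x d) hinjd (aj j) (bj j)]
        calc ∏ k ∈ Finset.range (m + 1), P (V (pathOf x d k) ⁻¹' Bset (aj j) (bj j))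
            ≤ ∏ _k ∈ Finset.range (m + 1), ENNReal.ofReal (1 / 8) :=
              Finset.prod_le_prod' (fun k _ => hq _ _ _ (hba j))
          _ = ENNReal.ofReal (1 / 8) ^ (m + 1) := by
              rw [Finset.prod_const, Finset.card_range]
      refine le_trans (Finset.sum_le_sum hper) ?_
      rw [Finset.sum_const, nsmul_eq_mul]
      have hcard : (((Finset.univ : Finset (Fin m → Fin 4)).filter
          (fun d => ∀ k l, k ≤ m → l ≤ m → pathOf x d k = pathOf x d l → k = l)).card : ENNReal)
          ≤ ((4 ^ m : ℕ) : ENNReal) := by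
        refine Nat.cast_le.2 ?_
        calc ((Finset.univ : Finset (Fin m → Fin 4)).filter
            (fun d => ∀ k l, k ≤ m → l ≤ m → pathOf x d k = pathOf x d l → k = l)).card
            ≤ (Finset.univ : Finset (Fin m → Fin 4)).card := Finset.card_filter_le _ _
          _ = 4 ^ m := by simp [Fintype.card_fun]
      have h4 : ((4 ^ m : ℕ) : ENNReal) = ENNReal.ofReal 4 ^ m := by
        rw [← ENNReal.ofReal_pow (by norm_num), ← ENNReal.ofReal_natCast]
        push_cast
        ring_nf
      have heq : ((4 ^ m : ℕ) : ENNReal) * ENNReal.ofReal (1 / 8) ^ (m + 1) =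
          ENNReal.ofReal (1 / 8) * ENNReal.ofReal (1 / 2) ^ m := by
        rw [h4, pow_succ',
          show ENNReal.ofReal 4 ^ m * (ENNReal.ofReal (1 / 8) * ENNReal.ofReal (1 / 8) ^ m) =
            ENNReal.ofReal (1 / 8) * (ENNReal.ofReal 4 * ENNReal.ofReal (1 / 8)) ^ m from by
              rw [mul_pow]; ring,
          show ENNReal.ofReal 4 * ENNReal.ofReal (1 / 8) = ENNReal.ofReal (1 / 2) from by
            rw [← ENNReal.ofReal_mul (by norm_num)]; norm_num]
      rw [← heq]
      exact mul_le_mul_left hcard _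
    have htend : Filter.Tendsto
        (fun m : ℕ => ENNReal.ofReal (1 / 8) * ENNReal.ofReal (1 / 2) ^ m)
        Filter.atTop (nhds 0) := by
      have h1 : Filter.Tendsto (fun m : ℕ => ENNReal.ofReal (1 / 2) ^ m)
          Filter.atTop (nhds 0) :=
        ENNReal.tendsto_pow_atTop_nhds_zero_of_lt_one (by
          rw [ENNReal.ofReal_lt_one]; norm_num)
      have h2 := ENNReal.Tendsto.const_mul h1
        (Or.inr (by simp : ENNReal.ofReal (1 / 8) ≠ ⊤))
      simpa using h2
    refine le_antisymm ?_ (zero_le)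
    exact ge_of_tendsto' htend hWle
  refine measure_mono_null ?_ (measure_iUnion_null (fun x : ℤ × ℤ =>
    measure_iUnion_null (fun j : ℕ => hnull x j)))
  -- covering
  rintro ω ⟨hωchain, hωpos⟩
  obtain ⟨g, r, hginj, hgadj, hgr, hmono⟩ := hωchain
  have hpos : ∀ (x : ℤ × ℤ) (n : ℕ), 0 < G x n ω := hωpos
  obtain ⟨L, hLt, hLs, hconv⟩ : ∃ L, t ≤ L ∧ L ≤ s ∧
      Filter.Tendsto r Filter.atTop (nhds L) := by
    rcases hmono with hm | hm
    · have hbdd : BddAbove (Set.range r) := ⟨s, by rintro _ ⟨k, rfl⟩; exact (hgr k).2.2⟩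
      refine ⟨⨆ k, r k, ?_, ?_, ?_⟩
      · exact le_trans (hgr 0).2.1.le (le_ciSup hbdd 0)
      · exact ciSup_le (fun k => (hgr k).2.2)
      · exact tendsto_atTop_ciSup hm.monotone hbdd
    · have hbdd : BddBelow (Set.range r) := ⟨t, by rintro _ ⟨k, rfl⟩; exact (hgr k).2.1.le⟩
      refine ⟨⨅ k, r k, ?_, ?_, ?_⟩
      · exact le_ciInf (fun k => (hgr k).2.1.le)
      · exact le_trans (ciInf_le hbdd 0) (hgr 0).2.2
      · exact tendsto_atTop_ciInf hm.antitone hbdd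
  set j : ℕ := ⌊(L - t) / δ⌋₊ with hjdef
  have hLt0 : 0 ≤ (L - t) / δ := by
    have : 0 ≤ L - t := by linarith
    positivity
  have hjle : (j : ℝ) * δ ≤ L - t := by
    have h1 := Nat.floor_le hLt0
    rw [← hjdef] at h1
    calc (j : ℝ) * δ ≤ ((L - t) / δ) * δ := mul_le_mul_of_nonneg_right h1 hδ0.le
      _ = L - t := by field_simp
  have hjgt : L - t < ((j : ℝ) + 1) * δ := by
    have h1 := Nat.lt_floor_add_one ((L - t) / δ)
    rw [← hjdef] at h1
    calc L - t = ((L - t) / δ) * δ := by field_simp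
      _ < ((j : ℝ) + 1) * δ := mul_lt_mul_of_pos_right (by exact_mod_cast h1) hδ0
  have hev : ∀ᶠ k in Filter.atTop, r k ∈ Set.Ioo (L - δ) (L + δ) :=
    hconv (Ioo_mem_nhds (by linarith) (by linarith))
  obtain ⟨K₀, hK₀⟩ := Filter.eventually_atTop.1 hev
  refine Set.mem_iUnion.2 ⟨g K₀, Set.mem_iUnion.2 ⟨j, ?_⟩⟩
  refine Set.mem_iInter.2 (fun m => ?_)
  obtain ⟨d, hd⟩ := exists_encoding m (fun k => g (K₀ + k)) (fun k _ => by
    have h1 := hgadj (K₀ + k)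
    rwa [show K₀ + k + 1 = K₀ + (k + 1) from by omega] at h1)
  simp only [Nat.add_zero] at hd
  refine Set.mem_iUnion₂.2 ⟨d, ?_, ?_⟩
  · rw [Finset.mem_filter]
    refine ⟨Finset.mem_univ d, fun k l hk hl heq => ?_⟩
    rw [hd k hk, hd l hl] at heq
    have := hginj heq
    omega
  · refine Set.mem_biInter (fun k hk => ?_)
    have hkm : k ≤ m := by
      have : k < m + 1 := Finset.mem_range.1 hk
      omega
    rw [hd k hkm, hVchar]
    obtain ⟨hring, hIoc⟩ := hgr (K₀ + k)
    obtain ⟨n, hn0⟩ := hring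
    have hn : (∑ i ∈ Finset.range (n + 1), G (g (K₀ + k)) i ω) = r (K₀ + k) := hn0
    have hwin : r (K₀ + k) ∈ Set.Ioc (aj j) (bj j) := by
      obtain ⟨h1, h2⟩ := hK₀ (K₀ + k) (by omega)
      constructor
      · refine max_lt ?_ hIoc.1
        simp only [haj] at *
        linarith
      · refine le_min ?_ hIoc.2
        linarith
    rcases le_or_gt n N with hnN | hnN
    · left
      exact ⟨n, hnN, by rw [hn]; exact hwin⟩
    · right
      have hsubset : Finset.range (N + 1) ⊆ Finset.range (n + 1) :=
        Finset.range_subset_range.2 (by omega)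
      have hmono' : (∑ i ∈ Finset.range (N + 1), G (g (K₀ + k)) i ω) ≤
          ∑ i ∈ Finset.range (n + 1), G (g (K₀ + k)) i ω :=
        Finset.sum_le_sum_of_subset_of_nonneg hsubset (fun i _ _ => (hpos _ i).le)
      rw [hn] at hmono'
      exact le_trans hmono' (le_trans hwin.2 (min_le_right _ _))

end ChainNull



section NullSets

variable {Ω : Type*} [MeasurableSpace Ω] {P : Measure Ω} [IsProbabilityMeasure P]
  {G : (ℤ × ℤ) → ℕ → Ω → ℝ} {U : (ℤ × ℤ) → Ω → ℝ}

lemma e1_null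
    (hexp : ∀ x n, ∀ s : ℝ, 0 ≤ s → (P {ω | G x n ω ≤ s}).toReal = 1 - Real.exp (-s)) :
    P {ω | ¬ ∀ (x : ℤ × ℤ) (n : ℕ), 0 < G x n ω} = 0 := by
  refine measure_mono_null ?_ (measure_iUnion_null
    (fun q : (ℤ × ℤ) × ℕ => law_nonpos hexp q.1 q.2 le_rfl))
  intro ω hω
  simp only [Set.mem_setOf_eq] at hω
  push_neg at hω
  obtain ⟨x, n, h⟩ := hω
  exact Set.mem_iUnion.2 ⟨(x, n), h⟩

lemma ennreal_zero_of_forall {a : ENNReal} (h : ∀ ε : ℝ, 0 < ε → a ≤ ENNReal.ofReal ε) :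
    a = 0 := by
  refine le_antisymm ?_ (zero_le)
  have h3 : Filter.Tendsto (fun k : ℕ => 1 / ((k : ℝ) + 1)) Filter.atTop (nhds 0) :=
    tendsto_one_div_add_atTop_nhds_zero_nat
  have h2 : Filter.Tendsto (fun k : ℕ => ENNReal.ofReal (1 / ((k : ℝ) + 1)))
      Filter.atTop (nhds 0) := by
    have := ENNReal.tendsto_ofReal h3
    simpa using this
  exact ge_of_tendsto' h2 (fun k => h _ (by positivity))

lemma e2_null (hGmeas : ∀ x n, Measurable (G x n)) (hUmeas : ∀ x, Measurable (U x))
    (hindep : iIndepFun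
      (Sum.elim (fun q : (ℤ × ℤ) × ℕ => G q.1 q.2) U) P)
    (hexp : ∀ x n, ∀ s : ℝ, 0 ≤ s → (P {ω | G x n ω ≤ s}).toReal = 1 - Real.exp (-s)) :
    P {ω | ¬ ∀ (x : ℤ × ℤ) (c : ℕ), ∃ n : ℕ,
      (c : ℝ) < ∑ i ∈ Finset.range (n + 1), G x i ω} = 0 := by
  have hnull : ∀ q : (ℤ × ℤ) × ℕ,
      P (⋂ n : ℕ, {ω | (∑ i ∈ Finset.range (n + 1), G q.1 i ω) ≤ (q.2 : ℝ)}) = 0 := by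
    intro q
    refine ennreal_zero_of_forall (fun ε hε => ?_)
    obtain ⟨N, hN⟩ := tail_bound hGmeas hUmeas hindep hexp (q.2 : ℝ) (Nat.cast_nonneg q.2) hε
    exact le_trans (measure_mono (Set.iInter_subset _ N)) (hN q.1)
  refine measure_mono_null ?_ (measure_iUnion_null hnull)
  intro ω hω
  simp only [Set.mem_setOf_eq] at hω
  push_neg at hω
  obtain ⟨x, c, h⟩ := hω
  exact Set.mem_iUnion.2 ⟨(x, c), Set.mem_iInter.2 (fun n => h n)⟩

end NullSets


/-- Percolation is preserved by majority dynamics on `ℤ²`: in the graphical construction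
(i.i.d. exponential clocks `G`, i.i.d. uniforms `U`, and for each density `p` a trajectory
`F p` started from `η₀(x) = 1{U_x ≤ p}`), for every `p ∈ [0,1]` and `0 ≤ t ≤ s`, almost
surely percolation of `η_t` implies percolation of `η_s`. Consequently the critical
percolation function `t ↦ p_c(t)` is non-increasing. -/
theorem percolation_preserved_and_pc_monotone {Ω : Type*} [MeasurableSpace Ω]
    (P : Measure Ω) [IsProbabilityMeasure P]
    (G : (ℤ × ℤ) → ℕ → Ω → ℝ) (U : (ℤ × ℤ) → Ω → ℝ)
    (hGmeas : ∀ x n, Measurable (G x n)) (hUmeas : ∀ x, Measurable (U x))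
    (hindep : iIndepFun
      (Sum.elim (fun q : (ℤ × ℤ) × ℕ => G q.1 q.2) U) P)
    (hexp : ∀ x n, ∀ s : ℝ, 0 ≤ s → (P {ω | G x n ω ≤ s}).toReal = 1 - Real.exp (-s))
    (hunif : ∀ x, ∀ s : ℝ, 0 ≤ s → s ≤ 1 → (P {ω | U x ω ≤ s}).toReal = s)
    (F : ℝ → Ω → ℝ → Config)
    (hF : ∀ p ∈ Set.Icc (0 : ℝ) 1, ∀ᵐ ω ∂P,
      IsMajorityTrajectory (ringTimes G ω) (F p ω) ∧
      ∀ x, (F p ω 0 x = true ↔ U x ω ≤ p)) :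
    (∀ p ∈ Set.Icc (0 : ℝ) 1, ∀ t s : ℝ, 0 ≤ t → t ≤ s →
      ∀ᵐ ω ∂P, Percolates (F p ω t) → Percolates (F p ω s)) ∧
    (∀ t s : ℝ, 0 ≤ s → s ≤ t → pcDyn P F t ≤ pcDyn P F s) := by
  have part1 : ∀ p ∈ Set.Icc (0 : ℝ) 1, ∀ t s : ℝ, 0 ≤ t → t ≤ s →
      ∀ᵐ ω ∂P, Percolates (F p ω t) → Percolates (F p ω s) := by
    intro p hp t s ht hts
    have h1 := hF p hp
    have h2 : ∀ᵐ ω ∂P, ∀ (x : ℤ × ℤ) (n : ℕ), 0 < G x n ω := by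
      rw [MeasureTheory.ae_iff]
      exact e1_null hexp
    have h3 : ∀ᵐ ω ∂P, ∀ (x : ℤ × ℤ) (c : ℕ), ∃ n : ℕ,
        (c : ℝ) < ∑ i ∈ Finset.range (n + 1), G x i ω := by
      rw [MeasureTheory.ae_iff]
      exact e2_null hGmeas hUmeas hindep hexp
    have h4 : ∀ᵐ ω ∂P, ω ∉ ({ω : Ω | ∃ (g : ℕ → ℤ × ℤ) (r : ℕ → ℝ), Function.Injective g ∧
        (∀ k, Adj (g k) (g (k + 1))) ∧
        (∀ k, r k ∈ ringTimes G ω (g k) ∧ r k ∈ Set.Ioc t s) ∧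
        (StrictMono r ∨ StrictAnti r)} ∩ {ω : Ω | ∀ (x : ℤ × ℤ) (n : ℕ), 0 < G x n ω}) := by
      rw [MeasureTheory.ae_iff]
      rw [show {a : Ω | ¬ a ∉ ({ω : Ω | ∃ (g : ℕ → ℤ × ℤ) (r : ℕ → ℝ), Function.Injective g ∧
          (∀ k, Adj (g k) (g (k + 1))) ∧
          (∀ k, r k ∈ ringTimes G ω (g k) ∧ r k ∈ Set.Ioc t s) ∧
          (StrictMono r ∨ StrictAnti r)} ∩ {ω : Ω | ∀ (x : ℤ × ℤ) (n : ℕ), 0 < G x n ω})} =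
          ({ω : Ω | ∃ (g : ℕ → ℤ × ℤ) (r : ℕ → ℝ), Function.Injective g ∧
          (∀ k, Adj (g k) (g (k + 1))) ∧
          (∀ k, r k ∈ ringTimes G ω (g k) ∧ r k ∈ Set.Ioc t s) ∧
          (StrictMono r ∨ StrictAnti r)} ∩ {ω : Ω | ∀ (x : ℤ × ℤ) (n : ℕ), 0 < G x n ω}) from by
        ext a; simp only [Set.mem_setOf_eq, not_not]]
      exact chain_null hGmeas hUmeas hindep hexp t s ht hts
    filter_upwards [h1, h2, h3, h4] with ω hω1 hω2 hω3 hω4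
    refine det_preserve (ringTimes G ω) (F p ω) t s ht hts hω1.1 ?_ ?_
    · intro x
      have hmono : StrictMono (fun n : ℕ => ∑ i ∈ Finset.range (n + 1), G x i ω) := by
        refine strictMono_nat_of_lt_succ (fun n => ?_)
        have heq : (∑ i ∈ Finset.range (n + 1 + 1), G x i ω) =
            (∑ i ∈ Finset.range (n + 1), G x i ω) + G x (n + 1) ω :=
          Finset.sum_range_succ _ _
        have hpos := hω2 x (n + 1)
        rw [heq]
        linarith
      obtain ⟨c, hc⟩ : ∃ c : ℕ, s ≤ (c : ℝ) := ⟨⌈s⌉₊, Nat.le_ceil s⟩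
      obtain ⟨n₀, hn₀⟩ := hω3 x c
      have hsub : ringTimes G ω x ∩ Set.Ioc t s ⊆
          (fun n : ℕ => ∑ i ∈ Finset.range (n + 1), G x i ω) '' {n | n ≤ n₀} := by
        rintro ρ ⟨⟨n, rfl⟩, hρ⟩
        refine ⟨n, ?_, rfl⟩
        by_contra hcon
        have hcon' : n₀ < n := by
          simp only [Set.mem_setOf_eq] at hcon
          omega
        have h5 : (∑ i ∈ Finset.range (n₀ + 1), G x i ω) ≤
            ∑ i ∈ Finset.range (n + 1), G x i ω := (hmono.monotone (le_of_lt hcon'))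
        have h6 : (∑ i ∈ Finset.range (n + 1), G x i ω) ≤ s := hρ.2
        linarith
      exact Set.Finite.subset (Set.Finite.image _ (Set.finite_le_nat n₀)) hsub
    · intro hcon
      exact hω4 ⟨hcon, hω2⟩
  refine ⟨part1, ?_⟩
  intro t s hs hst
  unfold pcDyn
  refine csInf_le_csInf ?_ ?_ ?_
  · refine ⟨0, ?_⟩
    rintro x hx
    rcases Set.mem_insert_iff.1 hx with rfl | hx
    · norm_num
    · exact hx.1.1
  · exact ⟨1, Set.mem_insert _ _⟩
  · intro p hp
    rcases Set.mem_insert_iff.1 hp with rfl | hp2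
    · exact Set.mem_insert _ _
    obtain ⟨hpIcc, hpos⟩ := hp2
    refine Set.mem_insert_of_mem _ ⟨hpIcc, ?_⟩
    have hae := part1 p hpIcc s t hs hst
    have hnull : P {ω | ¬ (Percolates (F p ω s) → Percolates (F p ω t))} = 0 :=
      (MeasureTheory.ae_iff).1 hae
    have hsub : {ω | Percolates (F p ω s)} ⊆ {ω | Percolates (F p ω t)} ∪
        {ω | ¬ (Percolates (F p ω s) → Percolates (F p ω t))} := by
      intro ω hω
      by_cases h : Percolates (F p ω t)
      · exact Or.inl h
      · exact Or.inr (fun himp => h (himp hω))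
    have hle := le_trans (measure_mono (μ := P) hsub) (measure_union_le (μ := P) _ _)
    rw [hnull, add_zero] at hle
    exact lt_of_lt_of_le hpos hle
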